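/- Let k be a commutative ring, A an associative unital k-algebra, Δ: A → A⊗A an A-bimodule map (i.e. Δ(ab) = (a⊗1)·Δ(b) = Δ(a)·(1⊗b) for all a,b ∈ A), and ε: A → k a k-linear map which is a counit for Δ, i.e. (ε⊗I_A)∘Δ = (I_A⊗ε)∘Δ = I_A (after the canonical identifications k⊗A ≅ A ≅ A⊗k). Then A is finitely generated and projective as a k-module. -/

import Mathlib

open TensorProduct

/-- If `A` has a coalgebra structure `(Δ, ε)` whose comultiplication `Δ` is an
`A`-bimodule map, then `A` is finitely generated and projective as a `k`-module. -/
theorem counit_bimodule_comul_implies_finite_projective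
    {k A : Type*} [CommRing k] [Ring A] [Algebra k A]
    (Δ : A →ₗ[k] A ⊗[k] A) (ε : A →ₗ[k] k)
    (hleft : ∀ a b : A, Δ (a * b) = (a ⊗ₜ[k] (1 : A)) * Δ b)
    (hright : ∀ a b : A, Δ (a * b) = Δ a * ((1 : A) ⊗ₜ[k] b))
    (hcounitl : ∀ a : A,
      (TensorProduct.lid k A) ((TensorProduct.map ε LinearMap.id) (Δ a)) = a)
    (hcounitr : ∀ a : A,
      (TensorProduct.rid k A) ((TensorProduct.map LinearMap.id ε) (Δ a)) = a) :
    Module.Finite k A ∧ Module.Projective k A := by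
  classical
  obtain ⟨S, hS⟩ := TensorProduct.exists_finset (Δ 1)
  have hΔ : ∀ a : A, Δ a = ∑ p ∈ S, p.1 ⊗ₜ[k] (p.2 * a) := by
    intro a
    have h1 : Δ a = Δ 1 * ((1 : A) ⊗ₜ[k] a) := by
      simpa using hright 1 a
    rw [h1, hS, Finset.sum_mul]
    refine Finset.sum_congr rfl fun p _ => ?_
    rw [Algebra.TensorProduct.tmul_mul_tmul, mul_one]
  have hrep : ∀ a : A, (∑ p ∈ S, ε (p.2 * a) • p.1) = a := by
    intro a
    have := hcounitr a
    rw [hΔ a, map_sum, map_sum] at this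
    simpa using this
  constructor
  · refine ⟨⟨S.image Prod.fst, ?_⟩⟩
    rw [eq_top_iff]
    intro a _
    rw [← hrep a]
    exact Submodule.sum_mem _ fun p hp => Submodule.smul_mem _ _
      (Submodule.subset_span (Finset.mem_coe.mpr (Finset.mem_image_of_mem _ hp)))
  · refine Module.projective_def'.mpr ⟨∑ p ∈ S,
      (Finsupp.lsingle p.1).comp (ε.comp (LinearMap.mulLeft k p.2)), ?_⟩
    ext a
    simp only [LinearMap.comp_apply, LinearMap.sum_apply, LinearMap.id_apply,
      Finsupp.lsingle_apply, LinearMap.mulLeft_apply, map_sum,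
      Finsupp.linearCombination_single, id_eq]
    exact hrep a
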